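/- For real numbers q > 0, μ > 0 and ρ ≥ 0, the integral ∫₀^∞ q·e^{-(q t + ρ(1 - e^{-μ t}))} dt equals Kummer's confluent hypergeometric function M(1, q/μ + 1, -ρ), i.e. it equals the convergent series ∑_{n=0}^∞ (-ρ)^n / ∏_{j=1}^{n} (q/μ + j). -/

import Mathlib

open MeasureTheory Real Set Finset
open scoped Nat

lemma intA {c : ℝ} (hc : 0 < c) : ∫ t in Ioi (0:ℝ), Real.exp (-(c*t)) = 1/c := by
  have h := integral_comp_mul_left_Ioi (fun x => Real.exp (-x)) 0 hc
  simp only [mul_zero, integral_exp_neg_Ioi_zero, smul_eq_mul, mul_one] at h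
  rw [h, one_div]

lemma binom_sum (n : ℕ) : ∀ a : ℝ, 0 < a →
    ∑ k ∈ Finset.range (n+1), (-1:ℝ)^k * (n.choose k) / (a + k)
      = (n ! : ℝ) / ∏ j ∈ Finset.range (n+1), (a + j) := by
  induction n with
  | zero => intro a ha; simp
  | succ n ih =>
    intro a ha
    have ha1 : (0:ℝ) < a + 1 := by linarith
    set g : ℕ → ℝ := fun k => (-1:ℝ)^k * (n.choose k) / (a + k) with hg
    set h : ℕ → ℝ := fun k => (-1:ℝ)^k * (n.choose k) / ((a+1) + k) with hh
    have key : ∑ k ∈ Finset.range (n+2), (-1:ℝ)^k * ((n+1).choose k) / (a + k)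
        = (∑ k ∈ Finset.range (n+1), g k) - ∑ k ∈ Finset.range (n+1), h k := by
      rw [Finset.sum_range_succ' (fun k => (-1:ℝ)^k * ((n+1).choose k) / (a + k)) (n+1)]
      have h1 : ∀ i ∈ Finset.range (n+1),
          (-1:ℝ)^(i+1) * (((n+1).choose (i+1) : ℕ) : ℝ) / (a + ((i:ℝ)+1))
            = -(h i) + g (i+1) := by
        intro i _
        simp only [hg, hh, Nat.choose_succ_succ]
        push_cast
        ring
      have h2 : ∑ i ∈ Finset.range (n+1), g (i+1)
          = (∑ i ∈ Finset.range (n+1), g i) - g 0 := by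
        have h3 : ∑ i ∈ Finset.range (n+2), g i
            = (∑ i ∈ Finset.range (n+1), g (i+1)) + g 0 :=
          Finset.sum_range_succ' g (n+1)
        have h4 : ∑ i ∈ Finset.range (n+2), g i
            = (∑ i ∈ Finset.range (n+1), g i) + g (n+1) := Finset.sum_range_succ g (n+1)
        have h5 : g (n+1) = 0 := by simp [hg, Nat.choose_succ_self]
        rw [h5, add_zero] at h4
        linarith
      push_cast
      rw [Finset.sum_congr rfl h1, Finset.sum_add_distrib, h2]
      have h6 : g 0 = 1/a := by simp [hg]
      have h7 : (-1:ℝ)^0 * (((n+1).choose 0 : ℕ) : ℝ) / (a + (0:ℕ)) = 1/a := by simp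
      rw [Finset.sum_neg_distrib]
      push_cast at h7 ⊢
      rw [h7, h6]
      ring
    rw [key, ih a ha, ih (a+1) ha1]
    have hPa : (0:ℝ) < ∏ j ∈ Finset.range (n+1), (a + j) :=
      Finset.prod_pos fun j _ => by positivity
    have hPa1 : (0:ℝ) < ∏ j ∈ Finset.range (n+1), ((a+1) + j) :=
      Finset.prod_pos fun j _ => by positivity
    have hQ : (0:ℝ) < ∏ j ∈ Finset.range (n+2), (a + j) :=
      Finset.prod_pos fun j _ => by positivity
    have hQ1 : ∏ j ∈ Finset.range (n+2), (a + (j:ℝ))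
        = (∏ j ∈ Finset.range (n+1), (a + (j:ℝ))) * (a + (n+1)) := by
      rw [Finset.prod_range_succ]; push_cast; ring
    have hQ2 : ∏ j ∈ Finset.range (n+2), (a + (j:ℝ))
        = (∏ j ∈ Finset.range (n+1), ((a+1) + (j:ℝ))) * a := by
      rw [Finset.prod_range_succ' (fun j => a + (j:ℝ)) (n+1)]
      congr 1
      · exact Finset.prod_congr rfl fun i _ => by push_cast; ring
      · simp
    rw [div_sub_div _ _ hPa.ne' hPa1.ne', div_eq_div_iff (by positivity) hQ.ne']
    rw [Nat.factorial_succ]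
    push_cast
    linear_combination ((n ! : ℝ) * ∏ j ∈ Finset.range (n+1), ((a+1) + (j:ℝ))) * hQ1
      - ((n ! : ℝ) * ∏ j ∈ Finset.range (n+1), (a + (j:ℝ))) * hQ2

lemma prod_shift (f : ℕ → ℝ) (n : ℕ) :
    ∏ j ∈ Finset.Icc 1 n, f j = ∏ j ∈ Finset.range n, f (j+1) := by
  induction n with
  | zero => simp
  | succ n ih =>
    rw [Finset.prod_Icc_succ_top (Nat.le_add_left 1 n), ih, Finset.prod_range_succ]

lemma prod_Icc_eq (a : ℝ) (n : ℕ) :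
    ∏ j ∈ Finset.range (n+1), (a + (j:ℝ)) = a * ∏ j ∈ Finset.Icc 1 n, (a + (j:ℝ)) := by
  rw [Finset.prod_range_succ' (fun j => a + (j:ℝ)) n, prod_shift (fun j => a + (j:ℝ)) n]
  rw [mul_comm]
  congr 1
  norm_num

lemma intC (q μ : ℝ) (hq : 0 < q) (hμ : 0 < μ) (n : ℕ) :
    ∫ t in Ioi (0:ℝ), q * Real.exp (-(q*t)) * (1 - Real.exp (-(μ*t)))^n
      = (n ! : ℝ) / ∏ j ∈ Finset.Icc 1 n, (q/μ + (j:ℝ)) := by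
  have hck : ∀ k : ℕ, (0:ℝ) < q + k * μ := fun k => by positivity
  have hint : ∀ k : ℕ, IntegrableOn (fun t => Real.exp (-((q + k*μ)*t))) (Ioi (0:ℝ)) := by
    intro k
    simpa only [neg_mul] using exp_neg_integrableOn_Ioi 0 (hck k)
  have hpt : ∀ t : ℝ, q * Real.exp (-(q*t)) * (1 - Real.exp (-(μ*t)))^n
      = ∑ k ∈ Finset.range (n+1),
          ((-1:ℝ)^k * (n.choose k) * q) * Real.exp (-((q + k*μ)*t)) := by
    intro t
    rw [sub_eq_add_neg, add_comm (1:ℝ), add_pow, Finset.mul_sum]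
    refine Finset.sum_congr rfl fun k hk => ?_
    have he : Real.exp (-((q + k*μ)*t)) = Real.exp (-(q*t)) * Real.exp (-(μ*t))^k := by
      rw [← Real.exp_nat_mul, ← Real.exp_add]
      congr 1
      ring
    rw [he]
    ring
  simp_rw [hpt]
  rw [MeasureTheory.integral_finset_sum _ (fun k _ => ((hint k).const_mul _))]
  have hval : ∀ k ∈ Finset.range (n+1),
      ∫ t in Ioi (0:ℝ), ((-1:ℝ)^k * (n.choose k) * q) * Real.exp (-((q + k*μ)*t))
        = (q/μ) * ((-1:ℝ)^k * (n.choose k) / (q/μ + k)) := by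
    intro k _
    rw [MeasureTheory.integral_const_mul, intA (hck k)]
    have hd : q + k * μ = μ * (q/μ + k) := by field_simp
    rw [hd]
    have h1 : (0:ℝ) < q/μ + k := by positivity
    field_simp
  rw [Finset.sum_congr rfl hval, ← Finset.mul_sum]
  rw [binom_sum n (q/μ) (by positivity)]
  rw [prod_Icc_eq (q/μ) n]
  have h2 : (0:ℝ) < ∏ j ∈ Finset.Icc 1 n, (q/μ + (j:ℝ)) :=
    Finset.prod_pos fun j hj => by
      have : (1:ℕ) ≤ j := (Finset.mem_Icc.mp hj).1
      positivity
  field_simp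

/-- For `q > 0`, `μ > 0`, `ρ ≥ 0`, the integral
`∫₀^∞ q e^{-(qt + ρ(1 - e^{-μt}))} dt` equals Kummer's function
`M(1, q/μ + 1, -ρ) = ∑ₙ (-ρ)ⁿ / ∏_{j=1}^n (q/μ + j)`. -/
theorem stmt_0 (q μ ρ : ℝ) (hq : 0 < q) (hμ : 0 < μ) (hρ : 0 ≤ ρ) :
    ∫ t in Set.Ioi (0 : ℝ), q * Real.exp (-(q * t + ρ * (1 - Real.exp (-μ * t))))
      = ∑' n : ℕ, (-ρ) ^ n / ∏ j ∈ Finset.Icc 1 n, (q / μ + (j : ℝ)) := by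
  set F : ℕ → ℝ → ℝ := fun n t =>
    ((-ρ)^n / (n ! : ℝ)) * (q * Real.exp (-(q*t)) * (1 - Real.exp (-(μ*t)))^n) with hF
  have hmeas : ∀ n, AEStronglyMeasurable (F n) (volume.restrict (Ioi (0:ℝ))) := by
    intro n
    apply Continuous.aestronglyMeasurable
    fun_prop
  have hbound : ∀ n : ℕ, ∀ᵐ t ∂(volume.restrict (Ioi (0:ℝ))),
      ‖F n t‖ ≤ (ρ^n / (n ! : ℝ)) * (q * Real.exp (-(q*t))) := by
    intro n
    filter_upwards [ae_restrict_mem measurableSet_Ioi] with t ht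
    have hs0 : 0 ≤ 1 - Real.exp (-(μ*t)) := by
      have : Real.exp (-(μ*t)) ≤ 1 := Real.exp_le_one_iff.mpr (by nlinarith [le_of_lt (Set.mem_Ioi.mp ht)])
      linarith
    have hs1 : 1 - Real.exp (-(μ*t)) ≤ 1 := by
      have := Real.exp_pos (-(μ*t)); linarith
    have habs : ‖F n t‖
        = (ρ^n / (n ! : ℝ)) * (q * Real.exp (-(q*t)) * (1 - Real.exp (-(μ*t)))^n) := by
      rw [Real.norm_eq_abs, abs_mul, abs_div, abs_pow, abs_neg, abs_of_nonneg hρ,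
        Nat.abs_cast, abs_of_nonneg (by positivity)]
    rw [habs]
    have hsn : (1 - Real.exp (-(μ*t)))^n ≤ 1 := pow_le_one₀ hs0 hs1
    have hnn : (0:ℝ) ≤ ρ^n / (n ! : ℝ) := by positivity
    have h1 : q * Real.exp (-(q*t)) * (1 - Real.exp (-(μ*t)))^n ≤ q * Real.exp (-(q*t)) := by
      nlinarith [mul_pos hq (Real.exp_pos (-(q*t)))]
    exact mul_le_mul_of_nonneg_left h1 hnn
  have hsummable : ∀ᵐ t ∂(volume.restrict (Ioi (0:ℝ))),
      Summable fun n : ℕ => (ρ^n / (n ! : ℝ)) * (q * Real.exp (-(q*t))) := by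
    filter_upwards with t
    exact (Real.summable_pow_div_factorial ρ).mul_right _
  have hbint : Integrable (fun t => ∑' n : ℕ, (ρ^n / (n ! : ℝ)) * (q * Real.exp (-(q*t))))
      (volume.restrict (Ioi (0:ℝ))) := by
    have heq : (fun t => ∑' n : ℕ, (ρ^n / (n ! : ℝ)) * (q * Real.exp (-(q*t))))
        = fun t => (∑' n : ℕ, ρ^n / (n ! : ℝ)) * (q * Real.exp (-(q*t))) :=
      funext fun t => tsum_mul_right
    rw [heq]
    have : IntegrableOn (fun t : ℝ => Real.exp (-(q*t))) (Ioi (0:ℝ)) := by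
      simpa [neg_mul] using exp_neg_integrableOn_Ioi 0 hq
    simpa [mul_assoc] using (this.const_mul ((∑' n : ℕ, ρ^n / (n ! : ℝ)) * q))
  have hlim : ∀ᵐ t ∂(volume.restrict (Ioi (0:ℝ))),
      HasSum (fun n => F n t) (q * Real.exp (-(q * t + ρ * (1 - Real.exp (-μ * t))))) := by
    filter_upwards with t
    have hS : HasSum (fun n : ℕ => (-(ρ * (1 - Real.exp (-(μ*t)))))^n / (n ! : ℝ))
        (Real.exp (-(ρ * (1 - Real.exp (-(μ*t)))))) := by
      rw [Real.exp_eq_exp_ℝ]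
      exact NormedSpace.expSeries_div_hasSum_exp _
    have hS2 := hS.mul_left (q * Real.exp (-(q*t)))
    have heq : (fun n : ℕ => (q * Real.exp (-(q*t))) *
        ((-(ρ * (1 - Real.exp (-(μ*t)))))^n / (n ! : ℝ))) = fun n => F n t := by
      funext n
      rw [hF]
      rw [show -(ρ * (1 - Real.exp (-(μ*t)))) = (-ρ) * (1 - Real.exp (-(μ*t))) by ring,
        mul_pow]
      ring
    rw [heq] at hS2
    convert hS2 using 1
    · rfl
    rw [mul_assoc, ← Real.exp_add]
    congr 1
    ring_nf
  have hHS := MeasureTheory.hasSum_integral_of_dominated_convergence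
    (fun n t => (ρ^n / (n ! : ℝ)) * (q * Real.exp (-(q*t)))) hmeas hbound hsummable hbint hlim
  have hint_val : ∀ n : ℕ, ∫ t in Ioi (0:ℝ), F n t
      = (-ρ)^n / ∏ j ∈ Finset.Icc 1 n, (q / μ + (j : ℝ)) := by
    intro n
    rw [hF]
    simp only
    rw [MeasureTheory.integral_const_mul, intC q μ hq hμ n]
    have hfac : ((n ! : ℕ) : ℝ) ≠ 0 := by positivity
    field_simp
  simp_rw [hint_val] at hHS
  exact hHS.tsum_eq.symm
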